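/- Let η, γ, ξ ∈ {0,1}^ℤ with η ≤ γ ≤ ξ pointwise. For m ≤ n and l ≥ 1, let g^l_{m,n} be the number of interior maximal constant blocks of length exactly l in the sequence (γ(x_1),...,γ(x_k)), where x_1 < ... < x_k are the sites in [m,n] with η=0 and ξ=1 (a block is interior if it has a differing γ-value on both sides within the sequence). Then g^l_{m,n} ≤ g^l_{m-1,n} and g^l_{m,n} ≤ g^l_{m,n+1}. -/

import Mathlib

open Classical Finset

/-- Sites `x ∈ [m,n]` where `η x = 0` and `ξ x = 1`. -/
noncomputable def sites (η ξ : ℤ → Bool) (m n : ℤ) : Finset ℤ :=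
  (Finset.Icc m n).filter (fun x => η x = false ∧ ξ x = true)

/-- The values of `γ` along the increasingly ordered sites of `[m,n]` where `η = 0`, `ξ = 1`. -/
noncomputable def gammaSeq (η γ ξ : ℤ → Bool) (m n : ℤ) : List Bool :=
  ((sites η ξ m n).sort (· ≤ ·)).map γ

/-- Number of adjacent sign changes in a list. -/
def changes : List Bool → ℕ
  | a :: b :: l => (if a ≠ b then 1 else 0) + changes (b :: l)
  | _ => 0

/-- Number of maximal constant blocks of a list. -/
def blocks : List Bool → ℕ
  | [] => 0
  | a :: l => 1 + changes (a :: l)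

/-- `f_{m,n}(η,γ,ξ)`: number of maximal constant blocks of `γ` along the
sites in `[m,n]` where `η = 0` and `ξ = 1`. -/
noncomputable def fCount (η γ ξ : ℤ → Bool) (m n : ℤ) : ℕ :=
  blocks (gammaSeq η γ ξ m n)

/-- Number of interior maximal constant blocks of length exactly `l` of a list `s`
(0-indexed: a block starting at index `i ≥ 1` with `i + l + 1 ≤ s.length`). -/
noncomputable def interiorBlocks (s : List Bool) (l : ℕ) : ℕ :=
  ((Finset.range s.length).filter (fun i =>
    1 ≤ i ∧ i + l + 1 ≤ s.length ∧
    s.getD (i - 1) false ≠ s.getD i false ∧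
    (∀ j, i ≤ j → j < i + l → s.getD j false = s.getD i false) ∧
    s.getD (i + l) false ≠ s.getD i false)).card

/-- `g^l_{m,n}(η,γ,ξ)`: number of interior maximal constant blocks of length `l` of `γ`
along the sites in `[m,n]` where `η = 0` and `ξ = 1`. -/
noncomputable def gCount (η γ ξ : ℤ → Bool) (m n : ℤ) (l : ℕ) : ℕ :=
  interiorBlocks (gammaSeq η γ ξ m n) l


lemma interiorBlocks_cons_le (a : Bool) (s : List Bool) (l : ℕ) :
    interiorBlocks s l ≤ interiorBlocks (a :: s) l := by
  unfold interiorBlocks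
  apply Finset.card_le_card_of_injOn (fun i => i + 1)
  · intro i hi
    simp only [Finset.mem_coe, Finset.mem_filter, Finset.mem_range, List.length_cons] at hi ⊢
    obtain ⟨hlen, h1, h2, h3, h4, h5⟩ := hi
    have key : ∀ j, (a :: s).getD (j + 1) false = s.getD j false := by
      intro j; rfl
    refine ⟨by omega, by omega, by omega, ?_, ?_, ?_⟩
    · have : i + 1 - 1 = (i - 1) + 1 := by omega
      rw [this, key, key]; exact h3
    · intro j hj1 hj2
      have : ∃ j', j = j' + 1 := ⟨j - 1, by omega⟩
      obtain ⟨j', rfl⟩ := this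
      rw [key, key]; exact h4 j' (by omega) (by omega)
    · have : i + 1 + l = (i + l) + 1 := by omega
      rw [this, key, key]; exact h5
  · intro x _ y _ h; simpa using h

lemma interiorBlocks_append_le (a : Bool) (s : List Bool) (l : ℕ) :
    interiorBlocks s l ≤ interiorBlocks (s ++ [a]) l := by
  unfold interiorBlocks
  apply Finset.card_le_card
  intro i hi
  simp only [Finset.mem_filter, Finset.mem_range, List.length_append,
    List.length_singleton] at hi ⊢
  obtain ⟨hlen, h1, h2, h3, h4, h5⟩ := hi
  have key : ∀ j, j < s.length → (s ++ [a]).getD j false = s.getD j false := by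
    intro j hj; exact List.getD_append _ _ _ _ hj
  refine ⟨by omega, by omega, by omega, ?_, ?_, ?_⟩
  · rw [key _ (by omega), key _ (by omega)]; exact h3
  · intro j hj1 hj2; rw [key _ (by omega), key _ (by omega)]; exact h4 j hj1 hj2
  · rw [key _ (by omega), key _ (by omega)]; exact h5

lemma sort_insert_max {b : ℤ} {s : Finset ℤ} (h₁ : ∀ x ∈ s, x ≤ b) (h₂ : b ∉ s) :
    (insert b s).sort (· ≤ ·) = s.sort (· ≤ ·) ++ [b] := by
  refine (fun (hp : List.Perm _ _) h1 h2 => List.Perm.eq_of_pairwise' (r := (· ≤ ·)) h1 h2 hp) ?_ ?_ ?_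
  · have : ((insert b s).sort (· ≤ ·) : Multiset ℤ) = ((s.sort (· ≤ ·) ++ [b] : List ℤ) : Multiset ℤ) := by
      rw [Finset.sort_eq, Finset.insert_val, Multiset.ndinsert_of_notMem h₂,
        ← Multiset.coe_add, Finset.sort_eq]
      rw [add_comm]
      rfl
    exact Multiset.coe_eq_coe.mp this
  · exact Finset.pairwise_sort _ _
  · rw [List.pairwise_append]
    refine ⟨Finset.pairwise_sort _ _, List.pairwise_singleton _ _, ?_⟩
    intro x hx y hy
    simp at hy; subst hy
    exact h₁ x ((Finset.mem_sort _).mp hx)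

lemma sites_insert_left (η ξ : ℤ → Bool) (m n : ℤ) (hmn : m ≤ n) :
    sites η ξ (m - 1) n =
      if η (m-1) = false ∧ ξ (m-1) = true then insert (m-1) (sites η ξ m n)
      else sites η ξ m n := by
  have hIcc : Finset.Icc (m-1) n = insert (m-1) (Finset.Icc m n) := by
    ext x; simp [Finset.mem_Icc]; omega
  rw [sites, hIcc, Finset.filter_insert]; rfl

lemma sites_insert_right (η ξ : ℤ → Bool) (m n : ℤ) (hmn : m ≤ n) :
    sites η ξ m (n + 1) =
      if η (n+1) = false ∧ ξ (n+1) = true then insert (n+1) (sites η ξ m n)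
      else sites η ξ m n := by
  have hIcc : Finset.Icc m (n+1) = insert (n+1) (Finset.Icc m n) := by
    ext x; simp [Finset.mem_Icc]; omega
  rw [sites, hIcc, Finset.filter_insert]; rfl

lemma mem_sites_bounds {η ξ : ℤ → Bool} {m n x : ℤ} (hx : x ∈ sites η ξ m n) :
    m ≤ x ∧ x ≤ n := by
  simp [sites, Finset.mem_Icc] at hx; exact ⟨hx.1.1, hx.1.2⟩

theorem g_monotone' (η γ ξ : ℤ → Bool)
    (m n : ℤ) (hmn : m ≤ n) (l : ℕ) :
    gCount η γ ξ m n l ≤ gCount η γ ξ (m - 1) n l ∧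
      gCount η γ ξ m n l ≤ gCount η γ ξ m (n + 1) l := by
  constructor
  · unfold gCount gammaSeq
    rw [sites_insert_left η ξ m n hmn]
    by_cases hP : η (m-1) = false ∧ ξ (m-1) = true
    · rw [if_pos hP]
      have hnot : (m-1) ∉ sites η ξ m n := fun h => by
        have := (mem_sites_bounds h).1; omega
      rw [Finset.sort_insert (· ≤ ·) (fun b hb => by have := (mem_sites_bounds hb).1; omega) hnot]
      exact interiorBlocks_cons_le _ _ _
    · rw [if_neg hP]
  · unfold gCount gammaSeq
    rw [sites_insert_right η ξ m n hmn]
    by_cases hP : η (n+1) = false ∧ ξ (n+1) = true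
    · rw [if_pos hP]
      have hnot : (n+1) ∉ sites η ξ m n := fun h => by
        have := (mem_sites_bounds h).2; omega
      rw [sort_insert_max (fun b hb => by have := (mem_sites_bounds hb).2; omega) hnot,
        List.map_append]
      exact interiorBlocks_append_le _ _ _
    · rw [if_neg hP]

/-- `g^l_{m,n}` is monotone when the interval is enlarged:
`g^l_{m,n} ≤ g^l_{m-1,n}` and `g^l_{m,n} ≤ g^l_{m,n+1}`. -/
theorem g_monotone (η γ ξ : ℤ → Bool)
    (hηγ : ∀ x, η x ≤ γ x) (hγξ : ∀ x, γ x ≤ ξ x)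
    (m n : ℤ) (hmn : m ≤ n) (l : ℕ) (hl : 1 ≤ l) :
    gCount η γ ξ m n l ≤ gCount η γ ξ (m - 1) n l ∧
      gCount η γ ξ m n l ≤ gCount η γ ξ m (n + 1) l := by
  exact g_monotone' η γ ξ m n hmn l
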